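/- Let (Ω, P) be a probability space, let D : Ω → ℕ be measurable with D and D² integrable (as real-valued functions), and let X : Ω → ℝ with X and X² integrable. Let f, φ ∈ ℝ and suppose that for every k ∈ ℕ: (i) the set integral of X over the event {D = k} equals k·f·P(D = k), and (ii) the set integral of X² over {D = k} equals (k·f + (k² − k)·φ·f)·P(D = k). Set μ_D = E[D] and σ_D² = E[D²] − μ_D². Then Var(X) = f·(μ_D²·(φ − f) + μ_D·(1 − φ) + σ_D²·φ). -/

import Mathlib

open MeasureTheory

lemma hasSum_fiber_integral {Ω : Type*} [MeasurableSpace Ω] (P : Measure Ω)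
    (D : Ω → ℕ) (hD : Measurable D) (g : Ω → ℝ) (hg : Integrable g P) :
    HasSum (fun k => ∫ ω in {ω | D ω = k}, g ω ∂P) (∫ ω, g ω ∂P) := by
  have hmeas : ∀ k : ℕ, MeasurableSet {ω | D ω = k} :=
    fun k => hD (measurableSet_singleton k)
  have hdisj : Pairwise (Function.onFun Disjoint fun k : ℕ => {ω | D ω = k}) := by
    intro i j hij
    simp only [Function.onFun, Set.disjoint_left, Set.mem_setOf_eq]
    rintro a rfl h; exact hij h
  have hunion : (⋃ k : ℕ, {ω | D ω = k}) = Set.univ := by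
    ext ω; simp
  have h := MeasureTheory.hasSum_integral_iUnion hmeas hdisj
    (by rw [hunion]; exact hg.integrableOn)
  rwa [hunion, setIntegral_univ] at h

/-- Paper Lemma 2 (variance formula):
`Var(X) = f·(μ_D²·(φ − f) + μ_D·(1 − φ) + σ_D²·φ)`. -/
theorem variance_indirect_response
    {Ω : Type*} [MeasurableSpace Ω] (P : Measure Ω) [IsProbabilityMeasure P]
    (D : Ω → ℕ) (hD : Measurable D)
    (hDint : Integrable (fun ω => (D ω : ℝ)) P)
    (hD2int : Integrable (fun ω => (D ω : ℝ) ^ 2) P)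
    (X : Ω → ℝ) (hX : Integrable X P) (hX2 : Integrable (fun ω => X ω ^ 2) P)
    (f φ : ℝ)
    (h1 : ∀ k : ℕ, ∫ ω in {ω | D ω = k}, X ω ∂P
          = (k : ℝ) * f * (P {ω | D ω = k}).toReal)
    (h2 : ∀ k : ℕ, ∫ ω in {ω | D ω = k}, X ω ^ 2 ∂P
          = ((k : ℝ) * f + ((k : ℝ) ^ 2 - (k : ℝ)) * φ * f) * (P {ω | D ω = k}).toReal)
    (μD σD2 : ℝ)
    (hμ : μD = ∫ ω, (D ω : ℝ) ∂P)
    (hσ : σD2 = (∫ ω, (D ω : ℝ) ^ 2 ∂P) - μD ^ 2) :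
    (∫ ω, X ω ^ 2 ∂P) - (∫ ω, X ω ∂P) ^ 2
      = f * (μD ^ 2 * (φ - f) + μD * (1 - φ) + σD2 * φ) := by
  have hmeas : ∀ k : ℕ, MeasurableSet {ω | D ω = k} :=
    fun k => hD (measurableSet_singleton k)
  set p : ℕ → ℝ := fun k => (P {ω | D ω = k}).toReal with hp
  -- fiberwise integrals of D and D²
  have hDk : ∀ k : ℕ, (∫ ω in {ω | D ω = k}, (D ω : ℝ) ∂P) = (k : ℝ) * p k := by
    intro k
    rw [setIntegral_congr_fun (hmeas k)
      (g := fun _ => (k : ℝ)) (fun ω hω => by simp [Set.mem_setOf_eq.mp hω]),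
      setIntegral_const, smul_eq_mul, mul_comm, measureReal_def]
  have hD2k : ∀ k : ℕ, (∫ ω in {ω | D ω = k}, (D ω : ℝ) ^ 2 ∂P) = (k : ℝ) ^ 2 * p k := by
    intro k
    rw [setIntegral_congr_fun (hmeas k)
      (g := fun _ => (k : ℝ) ^ 2) (fun ω hω => by simp [Set.mem_setOf_eq.mp hω]),
      setIntegral_const, smul_eq_mul, mul_comm, measureReal_def]
  have hSD : HasSum (fun k : ℕ => (k : ℝ) * p k) (∫ ω, (D ω : ℝ) ∂P) := by
    have := hasSum_fiber_integral P D hD _ hDint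
    simpa [hDk] using this
  have hSD2 : HasSum (fun k : ℕ => (k : ℝ) ^ 2 * p k) (∫ ω, (D ω : ℝ) ^ 2 ∂P) := by
    have := hasSum_fiber_integral P D hD _ hD2int
    simpa [hD2k] using this
  have hSX : HasSum (fun k : ℕ => (k : ℝ) * f * p k) (∫ ω, X ω ∂P) := by
    have := hasSum_fiber_integral P D hD _ hX
    simpa [h1] using this
  have hSX2 : HasSum
      (fun k : ℕ => ((k : ℝ) * f + ((k : ℝ) ^ 2 - (k : ℝ)) * φ * f) * p k)
      (∫ ω, X ω ^ 2 ∂P) := by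
    have := hasSum_fiber_integral P D hD _ hX2
    simpa [h2] using this
  -- E[X] = f * E[D]
  have hEX : (∫ ω, X ω ∂P) = f * (∫ ω, (D ω : ℝ) ∂P) := by
    have h' : HasSum (fun k : ℕ => (k : ℝ) * f * p k) (f * ∫ ω, (D ω : ℝ) ∂P) := by
      have := hSD.mul_left f
      convert this using 2 with k
      · rfl
      ring
    exact hSX.unique h'
  -- E[X²] = f*E[D] + φ f (E[D²] - E[D])
  have hEX2 : (∫ ω, X ω ^ 2 ∂P)
      = f * (∫ ω, (D ω : ℝ) ∂P) + φ * f * ((∫ ω, (D ω : ℝ) ^ 2 ∂P) - (∫ ω, (D ω : ℝ) ∂P)) := by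
    have h' : HasSum (fun k : ℕ => ((k : ℝ) * f + ((k : ℝ) ^ 2 - (k : ℝ)) * φ * f) * p k)
        (f * (∫ ω, (D ω : ℝ) ∂P)
          + φ * f * ((∫ ω, (D ω : ℝ) ^ 2 ∂P) - (∫ ω, (D ω : ℝ) ∂P))) := by
      have := (hSD.mul_left f).add ((hSD2.sub hSD).mul_left (φ * f))
      convert this using 2 with k
      · rfl
      ring
    exact hSX2.unique h'
  rw [hEX, hEX2, hμ] at *
  rw [hσ]
  ring
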